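/- Let f : T² → T² be a homeomorphism homotopic to the identity with a lift f̃ such that ρ(f̃) ⊂ ℓ_α^v for v ∈ S¹ of rational slope and α ∉ ℚ (appropriately normalized so that v is an integer direction scaled to unit length and α is the translation number), and suppose f exhibits uniformly bounded v-deviations and is minimal. Then f is a topological extension of an irrational circle rotation: there exists a continuous surjection h : T² → T¹ and β ∉ ℚ/ℤ with h ∘ f = R_β ∘ h, where R_β is the rotation by β. -/

import Mathlib

open Set Topology


/-- The two-dimensional torus `T² = ℝ²/ℤ²`. -/
abbrev T2 := AddCircle (1 : ℝ) × AddCircle (1 : ℝ)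

/-- The canonical projection `ℝ² → T²`. -/
noncomputable def proj (z : ℝ × ℝ) : T2 := ((z.1 : AddCircle (1 : ℝ)), (z.2 : AddCircle (1 : ℝ)))

/-- The `n`-th iterate (for `n : ℤ`) of a homeomorphism, as a map. -/
def zIter {X : Type*} [TopologicalSpace X] (f : X ≃ₜ X) (n : ℤ) : X → X :=
  fun x => if 0 ≤ n then (⇑f)^[n.toNat] x else (⇑f.symm)^[(-n).toNat] x

/-- The Euclidean inner product on `ℝ × ℝ`. -/
def ip (a b : ℝ × ℝ) : ℝ := a.1 * b.1 + a.2 * b.2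

/-- The Misiurewicz–Ziemian rotation set of a map `F : ℝ² → ℝ²`. -/
def rotSet (F : ℝ × ℝ → ℝ × ℝ) : Set (ℝ × ℝ) :=
  ⋂ m : ℕ, closure {w | ∃ n : ℕ, m ≤ n ∧ ∃ z : ℝ × ℝ, w = (n : ℝ)⁻¹ • (F^[n] z - z)}

lemma proj_continuous : Continuous proj :=
  ((AddCircle.continuous_mk' 1).comp continuous_fst).prodMk
    ((AddCircle.continuous_mk' 1).comp continuous_snd)

lemma proj_surjective : Function.Surjective proj := by
  intro x
  obtain ⟨a, ha⟩ := QuotientAddGroup.mk'_surjective (AddSubgroup.zmultiples (1:ℝ)) x.1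
  obtain ⟨b, hb⟩ := QuotientAddGroup.mk'_surjective (AddSubgroup.zmultiples (1:ℝ)) x.2
  exact ⟨(a,b), Prod.ext ha hb⟩

lemma proj_isQuotientMap : IsQuotientMap proj := by
  have h : IsOpenMap proj :=
    (QuotientAddGroup.isOpenMap_coe : IsOpenMap ((↑) : ℝ → AddCircle (1:ℝ))).prodMap
      (QuotientAddGroup.isOpenMap_coe : IsOpenMap ((↑) : ℝ → AddCircle (1:ℝ)))
  exact h.isQuotientMap proj_continuous proj_surjective

lemma proj_eq_exists {z w : ℝ × ℝ} (h : proj z = proj w) :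
    ∃ m n : ℤ, w = z + ((m:ℝ),(n:ℝ)) := by
  obtain ⟨h1, h2⟩ := Prod.ext_iff.mp h
  simp only [proj] at h1 h2
  rw [QuotientAddGroup.eq] at h1 h2
  rw [AddSubgroup.mem_zmultiples_iff] at h1 h2
  obtain ⟨m, hm⟩ := h1
  obtain ⟨n, hn⟩ := h2
  refine ⟨m, n, ?_⟩
  have hm' : (m:ℝ) = -z.1 + w.1 := by simpa using hm
  have hn' : (n:ℝ) = -z.2 + w.2 := by simpa using hn
  apply Prod.ext
  · show w.1 = z.1 + (m:ℝ)
    linarith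
  · show w.2 = z.2 + (n:ℝ)
    linarith

lemma proj_add_int (z : ℝ × ℝ) (m n : ℤ) : proj (z + ((m:ℝ),(n:ℝ))) = proj z := by
  apply Prod.ext
  · show ((z.1 + (m:ℝ) : ℝ) : AddCircle (1:ℝ)) = (z.1 : AddCircle (1:ℝ))
    rw [QuotientAddGroup.eq, AddSubgroup.mem_zmultiples_iff]
    exact ⟨-m, by rw [zsmul_eq_mul]; push_cast; ring⟩
  · show ((z.2 + (n:ℝ) : ℝ) : AddCircle (1:ℝ)) = (z.2 : AddCircle (1:ℝ))
    rw [QuotientAddGroup.eq, AddSubgroup.mem_zmultiples_iff]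
    exact ⟨-n, by rw [zsmul_eq_mul]; push_cast; ring⟩

/-- Descend a `ℤ²`-periodic map on `ℝ²` to the torus. -/
lemma descend {E : Type*} [TopologicalSpace E] (g : ℝ × ℝ → E) (hg : Continuous g)
    (hper : ∀ z : ℝ × ℝ, ∀ m n : ℤ, g (z + ((m:ℝ),(n:ℝ))) = g z) :
    ∃ G : T2 → E, Continuous G ∧ ∀ z, G (proj z) = g z := by
  have key : ∀ z w : ℝ × ℝ, proj z = proj w → g z = g w := by
    intro z w h
    obtain ⟨m, n, rfl⟩ := proj_eq_exists h
    exact (hper z m n).symm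
  refine ⟨fun x => g (Classical.choose (proj_surjective x)), ?_, ?_⟩
  · rw [proj_isQuotientMap.continuous_iff]
    have : (fun x => g (Classical.choose (proj_surjective x))) ∘ proj = g := by
      funext z
      exact key _ _ (Classical.choose_spec (proj_surjective (proj z)))
    rw [this]; exact hg
  · intro z
    exact key _ _ (Classical.choose_spec (proj_surjective (proj z)))

lemma zIter_succ {X : Type*} [TopologicalSpace X] (f : X ≃ₜ X) (n : ℤ) (z : X) :
    zIter f (n + 1) z = f (zIter f n z) := by
  unfold zIter
  rcases le_or_gt 0 n with hn | hn
  · rw [if_pos hn, if_pos (by omega)]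
    have h : (n + 1).toNat = n.toNat + 1 := by omega
    rw [h, Function.iterate_succ_apply']
  · rcases eq_or_lt_of_le (by omega : n + 1 ≤ 0) with h0 | h0
    · rw [if_pos (le_of_eq h0.symm), if_neg (by omega)]
      have h1 : (n+1).toNat = 0 := by omega
      have h2 : (-n).toNat = 1 := by omega
      rw [h1, h2]
      simp
    · rw [if_neg (by omega), if_neg (by omega)]
      have h : (-n).toNat = (-(n+1)).toNat + 1 := by omega
      rw [h, Function.iterate_succ_apply']
      exact (f.apply_symm_apply _).symm

/-- Gottschalk–Hedlund: on a minimal system, a cocycle with a bounded invariant set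
in the skew product is a continuous coboundary. -/
lemma gottschalk_hedlund {X : Type*} [TopologicalSpace X] [T2Space X]
    (f : X ≃ₜ X)
    (hmin : ∀ A : Set X, IsClosed A → (⇑f) '' A = A → A = ∅ ∨ A = Set.univ)
    (φ : X → ℝ) (hφ : Continuous φ)
    (Y : Set (X × ℝ)) (hYne : Y.Nonempty) (hYc : IsCompact Y)
    (hTY : Set.MapsTo (fun p : X × ℝ => (f p.1, p.2 + φ p.1)) Y Y)
    (hTiY : Set.MapsTo (fun p : X × ℝ => (f.symm p.1, p.2 - φ (f.symm p.1))) Y Y) :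
    ∃ u : X → ℝ, Continuous u ∧ ∀ x, u (f x) = u x + φ x := by
  set T : X × ℝ → X × ℝ := fun p => (f p.1, p.2 + φ p.1) with hTdef
  set Ti : X × ℝ → X × ℝ := fun p => (f.symm p.1, p.2 - φ (f.symm p.1)) with hTidef
  have hTiT : ∀ p, Ti (T p) = p := by
    intro p; simp [hTdef, hTidef]
  have hTTi : ∀ p, T (Ti p) = p := by
    intro p; simp [hTdef, hTidef]
  set S : Set (Set (X × ℝ)) :=
    {Z | Z ⊆ Y ∧ Z.Nonempty ∧ IsClosed Z ∧ Set.MapsTo T Z Z ∧ Set.MapsTo Ti Z Z} with hSdef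
  have hYS : Y ∈ S := ⟨subset_rfl, hYne, hYc.isClosed, hTY, hTiY⟩
  have hch : ∀ c ⊆ S, IsChain (· ⊆ ·) c → c.Nonempty → ∃ lb ∈ S, ∀ s ∈ c, lb ⊆ s := by
    intro c hcS hchain hcne
    haveI : Nonempty c := hcne.to_subtype
    refine ⟨⋂₀ c, ⟨?_, ?_, ?_, ?_, ?_⟩, fun s hs => sInter_subset_of_mem hs⟩
    · obtain ⟨s, hs⟩ := hcne
      exact (sInter_subset_of_mem hs).trans (hcS hs).1
    · rw [sInter_eq_iInter]
      apply IsCompact.nonempty_iInter_of_directed_nonempty_isCompact_isClosed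
      · intro s t
        rcases eq_or_ne (s : Set (X × ℝ)) t with h | h
        · exact ⟨s, subset_rfl, h ▸ subset_rfl⟩
        · rcases hchain s.2 t.2 h with h' | h'
          · exact ⟨s, subset_rfl, h'⟩
          · exact ⟨t, h', subset_rfl⟩
      · exact fun s => (hcS s.2).2.1
      · exact fun s => hYc.of_isClosed_subset (hcS s.2).2.2.1 (hcS s.2).1
      · exact fun s => (hcS s.2).2.2.1
    · exact isClosed_sInter fun s hs => (hcS hs).2.2.1
    · intro p hp
      rw [mem_sInter] at hp ⊢
      exact fun s hs => (hcS hs).2.2.2.1 (hp s hs)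
    · intro p hp
      rw [mem_sInter] at hp ⊢
      exact fun s hs => (hcS hs).2.2.2.2 (hp s hs)
  obtain ⟨M, hMY, hMmin⟩ := zorn_superset_nonempty S hch Y hYS
  obtain ⟨⟨hMsub, hMne, hMcl, hMT, hMTi⟩, hMm⟩ := hMmin
  have hMc : IsCompact M := hYc.of_isClosed_subset hMcl hMsub
  -- bound on second coordinates
  obtain ⟨C, hC⟩ : ∃ C, ∀ p ∈ M, |p.2| ≤ C := by
    obtain ⟨C, hC⟩ := (hYc.image (continuous_abs.comp continuous_snd)).bddAbove
    exact ⟨C, fun p hp => hC (mem_image_of_mem _ (hMsub hp))⟩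
  -- graph uniqueness
  have huniq : ∀ (x : X) (t s : ℝ), (x, t) ∈ M → (x, t + s) ∈ M → s = 0 := by
    intro x t s h1 h2
    by_contra hs
    have hWS : M ∩ (fun p : X × ℝ => (p.1, p.2 + s)) ⁻¹' M ∈ S := by
      refine ⟨inter_subset_left.trans hMsub, ⟨(x,t), h1, h2⟩,
        hMcl.inter (hMcl.preimage (by fun_prop)), ?_, ?_⟩
      · rintro p ⟨hp1, hp2⟩
        refine ⟨hMT hp1, ?_⟩
        have := hMT hp2
        simp only [hTdef, mem_preimage] at this ⊢
        convert this using 2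
        ring
      · rintro p ⟨hp1, hp2⟩
        refine ⟨hMTi hp1, ?_⟩
        have := hMTi hp2
        simp only [hTidef, mem_preimage] at this ⊢
        convert this using 2
        ring
    have hMW := hMm hWS inter_subset_left
    have step : ∀ p ∈ M, (p.1, p.2 + s) ∈ M := fun p hp => (hMW hp).2
    have hn : ∀ n : ℕ, (x, t + n * s) ∈ M := by
      intro n
      induction n with
      | zero => simpa using h1
      | succ k ih =>
        have := step _ ih
        simp only at this
        convert this using 2
        push_cast; ring
    obtain ⟨n, hnn⟩ := exists_nat_gt ((C + |t|) / |s|)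
    have h1' : (n:ℝ) * |s| > C + |t| := by
      rw [gt_iff_lt, ← div_lt_iff₀ (abs_pos.mpr hs)]
      exact hnn
    have h2' : (n:ℝ) * |s| ≤ C + |t| := by
      have hb := hC _ (hn n)
      simp only at hb
      calc (n:ℝ) * |s| = |(n:ℝ) * s| := by rw [abs_mul, Nat.abs_cast]
        _ = |t + n * s - t| := by ring_nf
        _ ≤ |t + n * s| + |t| := abs_sub _ _
        _ ≤ C + |t| := by linarith
    linarith
  -- first projection is onto
  have hproj : Prod.fst '' M = univ := by
    have hcl : IsClosed (Prod.fst '' M) := (hMc.image continuous_fst).isClosed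
    have hinv : (⇑f) '' (Prod.fst '' M) = Prod.fst '' M := by
      apply Subset.antisymm
      · rintro _ ⟨_, ⟨p, hp, rfl⟩, rfl⟩
        exact ⟨T p, hMT hp, rfl⟩
      · rintro _ ⟨p, hp, rfl⟩
        exact ⟨(Ti p).1, ⟨Ti p, hMTi hp, rfl⟩, by simp [hTidef]⟩
    rcases hmin _ hcl hinv with h | h
    · obtain ⟨p, hp⟩ := hMne
      exact absurd (mem_image_of_mem Prod.fst hp) (by simp [h])
    · exact h
  haveI : CompactSpace ↥M := isCompact_iff_compactSpace.mp hMc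
  have hbij : Function.Bijective (fun p : ↥M => (p : X × ℝ).1) := by
    constructor
    · rintro ⟨p, hp⟩ ⟨q, hq⟩ hpq
      simp only at hpq
      have hq' : (p.1, p.2 + (q.2 - p.2)) ∈ M := by
        have : (p.1, p.2 + (q.2 - p.2)) = q := by
          apply Prod.ext
          · exact hpq
          · simp
        rw [this]; exact hq
      have h0 := huniq p.1 p.2 (q.2 - p.2) (by simpa using hp) hq'
      have : p = q := by
        apply Prod.ext
        · exact hpq
        · have : q.2 = p.2 := by linarith [sub_eq_zero.mp h0]
          exact this.symm
      exact Subtype.ext this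
    · intro x
      have hx : x ∈ Prod.fst '' M := hproj ▸ mem_univ x
      obtain ⟨p, hp, rfl⟩ := hx
      exact ⟨⟨p, hp⟩, rfl⟩
  let e : ↥M ≃ X := Equiv.ofBijective _ hbij
  have hec : Continuous ⇑e := continuous_fst.comp continuous_subtype_val
  let He : ↥M ≃ₜ X := hec.homeoOfEquivCompactToT2
  set u : X → ℝ := fun x => ((He.symm x : ↥M) : X × ℝ).2 with hudef
  have hmem : ∀ x : X, (x, u x) ∈ M := by
    intro x
    have h1 : ((He.symm x : ↥M) : X × ℝ).1 = x := by
      have : He (He.symm x) = x := He.apply_symm_apply x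
      exact this
    have h2 : ((He.symm x : ↥M) : X × ℝ) ∈ M := (He.symm x).2
    have : ((He.symm x : ↥M) : X × ℝ) = (x, u x) := by
      apply Prod.ext
      · exact h1
      · rfl
    rwa [this] at h2
  have hu : ∀ (x : X) (t : ℝ), (x, t) ∈ M → t = u x := by
    intro x t ht
    have h0 := huniq x (u x) (t - u x) (hmem x) (by simpa using ht)
    linarith [sub_eq_zero.mp h0]
  refine ⟨u, ?_, ?_⟩
  · exact continuous_snd.comp (continuous_subtype_val.comp He.symm.continuous)
  · intro x
    have := hMT (hmem x)
    simp only [hTdef] at this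
    exact (hu _ _ this).symm

/-- A minimal `f ∈ Homeo₀(T²)` whose rotation set lies on a rational-slope line
`ℓ_α^v` with `α` irrational, and which has uniformly bounded `v`-deviations, is a
topological extension of an irrational circle rotation: there are a continuous surjection
`h : T² → T¹` and an irrational `β` with `h ∘ f = R_β ∘ h`. -/
theorem bounded_deviations_give_circle_rotation_factor
    (f : T2 ≃ₜ T2)
    (hmin : ∀ A : Set T2, IsClosed A → (⇑f) '' A = A → A = ∅ ∨ A = Set.univ)
    (ft : (ℝ × ℝ) ≃ₜ (ℝ × ℝ))
    (hlift : ∀ z, proj (ft z) = f (proj z))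
    (hper : ∀ z : ℝ × ℝ, ∀ p : ℤ × ℤ,
      ft (z + ((p.1 : ℝ), (p.2 : ℝ))) = ft z + ((p.1 : ℝ), (p.2 : ℝ)))
    (v : ℝ × ℝ) (hv : v.1 ^ 2 + v.2 ^ 2 = 1)
    (hrat : ∃ p q : ℤ, (p, q) ≠ (0, 0) ∧ (p : ℝ) * v.1 + (q : ℝ) * v.2 = 0)
    (α : ℝ) (hα : Irrational α)
    (hline : rotSet (⇑ft) ⊆ {w | ∃ t : ℝ, w = α • v + t • (-v.2, v.1)})
    (hbdd : ∃ M : ℝ, 0 < M ∧ ∀ z : ℝ × ℝ, ∀ n : ℤ,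
      |ip (zIter ft n z - z) v - (n : ℝ) * α| ≤ M) :
    ∃ h : T2 → AddCircle (1 : ℝ), Continuous h ∧ Function.Surjective h ∧
      ∃ β : ℝ, Irrational β ∧ ∀ x : T2, h (f x) = h x + (β : AddCircle (1 : ℝ)) := by
  obtain ⟨M0, hM0, hbdd'⟩ := hbdd
  obtain ⟨p, q, hpq0, hor⟩ := hrat
  -- extract the direction data: v = t • (-q, p) for a nonzero t
  obtain ⟨t, ht0, htv1, htv2⟩ :
      ∃ t : ℝ, t ≠ 0 ∧ v.1 = -(q:ℝ) * t ∧ v.2 = (p:ℝ) * t := by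
    by_cases hp : (p:ℝ) = 0
    · have hpz : p = 0 := by exact_mod_cast hp
      have hq : q ≠ 0 := by
        intro hqz; exact hpq0 (by rw [hpz, hqz])
      have hqR : (q:ℝ) ≠ 0 := Int.cast_ne_zero.mpr hq
      have hv2 : v.2 = 0 := by
        have : (q:ℝ) * v.2 = 0 := by rw [hp] at hor; linarith
        exact (mul_eq_zero.mp this).resolve_left hqR
      have hv1 : v.1 ≠ 0 := by
        intro h1; rw [h1, hv2] at hv; norm_num at hv
      refine ⟨-v.1 / q, ?_, ?_, ?_⟩
      · exact div_ne_zero (neg_ne_zero.mpr hv1) hqR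
      · field_simp
      · rw [hp, hv2]; ring
    · refine ⟨v.2 / p, ?_, ?_, ?_⟩
      · intro h0
        have hv2 : v.2 = 0 := by
          exact (div_eq_zero_iff.mp h0).resolve_right hp
        have hv1 : v.1 = 0 := by
          have : (p:ℝ) * v.1 = 0 := by rw [hv2] at hor; linarith
          exact (mul_eq_zero.mp this).resolve_left hp
        rw [hv1, hv2] at hv; norm_num at hv
      · have : (p:ℝ) * v.1 = -((q:ℝ) * v.2) := by linarith
        field_simp
        linarith [this]
      · field_simp
  set g : ℕ := Int.gcd p q with hgdef
  have hgpos : 0 < g := by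
    have hor2 : p ≠ 0 ∨ q ≠ 0 := by
      by_contra hc
      push_neg at hc
      exact hpq0 (by rw [hc.1, hc.2])
    exact Int.gcd_pos_iff.mpr hor2
  have hgR : ((g:ℤ):ℝ) ≠ 0 := by
    simp only [Int.cast_natCast, ne_eq, Nat.cast_eq_zero]
    omega
  set Nr : ℝ := 1 / (t * g) with hNrdef
  have hNr0 : Nr ≠ 0 := by
    rw [hNrdef]
    apply one_div_ne_zero
    apply mul_ne_zero ht0
    simpa using hgR
  have hipmn : ∀ m n : ℤ, ip ((m:ℝ),(n:ℝ)) v = t * ((p*n - q*m : ℤ):ℝ) := by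
    intro m n
    simp only [ip, htv1, htv2]
    push_cast
    ring
  have hlat : ∀ m n : ℤ, ∃ k : ℤ, Nr * ip ((m:ℝ),(n:ℝ)) v = (k:ℝ) := by
    intro m n
    have hdvd : ((g:ℕ):ℤ) ∣ (p*n - q*m) :=
      dvd_sub ((Int.gcd_dvd_left p q).mul_right n) ((Int.gcd_dvd_right p q).mul_right m)
    obtain ⟨k, hk⟩ := hdvd
    refine ⟨k, ?_⟩
    rw [hipmn, hk, hNrdef]
    push_cast
    field_simp
  have hone : ∃ m n : ℤ, Nr * ip ((m:ℝ),(n:ℝ)) v = 1 := by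
    refine ⟨-(Int.gcdB p q), Int.gcdA p q, ?_⟩
    have hbez : ((g:ℕ):ℤ) = p * Int.gcdA p q + q * Int.gcdB p q := Int.gcd_eq_gcd_ab p q
    rw [hipmn]
    have : (p * Int.gcdA p q - q * -Int.gcdB p q : ℤ) = ((g:ℕ):ℤ) := by rw [hbez]; ring
    rw [this, hNrdef]
    push_cast
    field_simp
  -- the cocycle
  set φ₀ : ℝ × ℝ → ℝ := fun z => Nr * ip (ft z - z) v - Nr * α with hφ₀def
  have hφ₀c : Continuous φ₀ := by
    simp only [hφ₀def, ip]
    fun_prop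
  have hφ₀per : ∀ z : ℝ × ℝ, ∀ m n : ℤ, φ₀ (z + ((m:ℝ),(n:ℝ))) = φ₀ z := by
    intro z m n
    have := hper z (m, n)
    simp only [hφ₀def, this]
    have : ft z + ((m:ℝ),(n:ℝ)) - (z + ((m:ℝ),(n:ℝ))) = ft z - z := by
      apply Prod.ext <;> simp
    rw [this]
  obtain ⟨φ, hφc, hφproj⟩ := descend φ₀ hφ₀c hφ₀per
  -- the bounded orbit
  set zn : ℤ → ℝ × ℝ := fun n => zIter ft n 0 with hzndef
  have hznsucc : ∀ n : ℤ, zn (n+1) = ft (zn n) := fun n => zIter_succ ft n 0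
  set σ : ℤ → ℝ := fun n => Nr * (ip (zn n - 0) v - (n:ℝ) * α) with hσdef
  set Tpt : ℤ → T2 × ℝ := fun n => (proj (zn n), σ n) with hTptdef
  set T : T2 × ℝ → T2 × ℝ := fun r => (f r.1, r.2 + φ r.1) with hTdef
  set Ti : T2 × ℝ → T2 × ℝ := fun r => (f.symm r.1, r.2 - φ (f.symm r.1)) with hTidef
  have hTiT : ∀ r, Ti (T r) = r := by intro r; simp [hTdef, hTidef]
  have hTpt : ∀ n : ℤ, T (Tpt n) = Tpt (n+1) := by
    intro n
    apply Prod.ext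
    · show f (proj (zn n)) = proj (zn (n+1))
      rw [hznsucc n, hlift]
    · show σ n + φ (proj (zn n)) = σ (n+1)
      rw [hφproj]
      simp only [hσdef, hφ₀def, hznsucc n, ip, Prod.fst_sub, Prod.snd_sub,
        Prod.fst_add, Prod.snd_add, Prod.fst_neg, Prod.snd_neg]
      push_cast
      ring
  set O : Set (T2 × ℝ) := Set.range Tpt with hOdef
  have hTO : Set.MapsTo T O O := by
    rintro _ ⟨n, rfl⟩
    exact ⟨n+1, (hTpt n).symm⟩
  have hTiO : Set.MapsTo Ti O O := by
    rintro _ ⟨n, rfl⟩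
    refine ⟨n-1, ?_⟩
    have h1 : T (Tpt (n-1)) = Tpt n := by rw [hTpt (n-1)]; norm_num
    rw [← h1, hTiT]
  have hTc : Continuous T := by
    simp only [hTdef]
    exact (f.continuous.comp continuous_fst).prodMk
      (continuous_snd.add (hφc.comp continuous_fst))
  have hTic : Continuous Ti := by
    simp only [hTidef]
    exact (f.symm.continuous.comp continuous_fst).prodMk
      (continuous_snd.sub (hφc.comp (f.symm.continuous.comp continuous_fst)))
  set Y : Set (T2 × ℝ) := closure O with hYdef
  have hσbd : ∀ n : ℤ, |σ n| ≤ |Nr| * M0 := by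
    intro n
    rw [hσdef]
    simp only
    rw [abs_mul]
    exact mul_le_mul_of_nonneg_left (hbdd' 0 n) (abs_nonneg Nr)
  have hOK : O ⊆ univ ×ˢ Icc (-(|Nr| * M0)) (|Nr| * M0) := by
    rintro _ ⟨n, rfl⟩
    refine ⟨mem_univ _, ?_⟩
    have := hσbd n
    rw [abs_le] at this
    exact this
  have hYK : Y ⊆ univ ×ˢ Icc (-(|Nr| * M0)) (|Nr| * M0) :=
    closure_minimal hOK (isClosed_univ.prod isClosed_Icc)
  have hYc : IsCompact Y :=
    (isCompact_univ.prod isCompact_Icc).of_isClosed_subset isClosed_closure hYK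
  have hYne : Y.Nonempty := ⟨Tpt 0, subset_closure ⟨0, rfl⟩⟩
  obtain ⟨u, huc, hu⟩ := gottschalk_hedlund f hmin φ hφc Y hYne hYc
    (hTO.closure hTc) (hTiO.closure hTic)
  -- build the semiconjugacy
  set H : ℝ × ℝ → ℝ := fun z => Nr * ip z v - u (proj z) with hHdef
  have hHc : Continuous H := by
    simp only [hHdef, ip]
    exact (continuous_const.mul ((continuous_fst.mul continuous_const).add
      (continuous_snd.mul continuous_const))).sub (huc.comp proj_continuous)
  have hHadd : ∀ (z : ℝ × ℝ) (m n : ℤ),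
      H (z + ((m:ℝ),(n:ℝ))) = H z + Nr * ip ((m:ℝ),(n:ℝ)) v := by
    intro z m n
    simp only [hHdef, proj_add_int, ip]
    simp only [Prod.fst_add, Prod.snd_add]
    ring
  set β : ℝ := Nr * α with hβdef
  have hkey : ∀ z : ℝ × ℝ, H (ft z) = H z + β := by
    intro z
    have h1 : u (proj (ft z)) = u (proj z) + φ (proj z) := by
      rw [hlift]; exact hu (proj z)
    simp only [hHdef, h1, hφproj, hφ₀def, hβdef, ip]
    simp only [Prod.fst_sub, Prod.snd_sub]
    ring
  -- descend to the torus
  have hg2per : ∀ z : ℝ × ℝ, ∀ m n : ℤ,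
      ((H (z + ((m:ℝ),(n:ℝ))) : ℝ) : AddCircle (1:ℝ)) = ((H z : ℝ) : AddCircle (1:ℝ)) := by
    intro z m n
    obtain ⟨k, hk⟩ := hlat m n
    rw [hHadd, hk, QuotientAddGroup.eq, AddSubgroup.mem_zmultiples_iff]
    exact ⟨-k, by rw [zsmul_eq_mul]; push_cast; ring⟩
  obtain ⟨h, hhc, hhproj⟩ := descend (fun z => ((H z : ℝ) : AddCircle (1:ℝ)))
    ((AddCircle.continuous_mk' 1).comp hHc) hg2per
  have hconj : ∀ x : T2, h (f x) = h x + ((β : ℝ) : AddCircle (1:ℝ)) := by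
    intro x
    obtain ⟨z, rfl⟩ := proj_surjective x
    rw [← hlift, hhproj, hhproj, hkey]
    push_cast
    rfl
  have hsurj : Function.Surjective h := by
    obtain ⟨m0, n0, hone'⟩ := hone
    set w0 : ℝ × ℝ := ((m0:ℝ),(n0:ℝ)) with hw0def
    set γ : ℝ → ℝ := fun s => H (s • w0) with hγdef
    have hγc : Continuous γ := hHc.comp (continuous_id.smul continuous_const)
    have hγ0 : γ 0 = H 0 := by simp [hγdef]
    have hγ1 : γ 1 = H 0 + 1 := by
      have : (1:ℝ) • w0 = (0:ℝ×ℝ) + w0 := by simp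
      rw [hγdef]
      simp only
      rw [this, hHadd 0 m0 n0, hone']
    intro y
    have himg : y ∈ ((↑) : ℝ → AddCircle (1:ℝ)) '' Ico (γ 0) (γ 0 + 1) := by
      rw [AddCircle.coe_image_Ico_eq]
      exact mem_univ y
    obtain ⟨r, hr, hry⟩ := himg
    have hrIcc : r ∈ Icc (γ 0) (γ 1) := by
      rw [hγ1, ← hγ0] at *
      exact ⟨hr.1, le_of_lt (by rw [hγ0] at hr ⊢; exact hr.2)⟩
    obtain ⟨s, _, hs⟩ := intermediate_value_Icc (by norm_num : (0:ℝ) ≤ 1)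
      (hγc.continuousOn) hrIcc
    refine ⟨proj (s • w0), ?_⟩
    rw [hhproj]
    show ((H (s • w0) : ℝ) : AddCircle (1:ℝ)) = y
    rw [show H (s • w0) = r from hs, hry]
  refine ⟨h, hhc, hsurj, β, ?_, hconj⟩
  -- irrationality of β via minimality
  by_contra hirr
  have hirr2 : β ∈ Set.range ((↑) : ℚ → ℝ) := not_not.mp (by simpa [Irrational] using hirr)
  obtain ⟨r, hr⟩ := hirr2
  set βc : AddCircle (1:ℝ) := ((β : ℝ) : AddCircle (1:ℝ)) with hβcdef
  set d : ℕ := r.den with hddef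
  have hdpos : 0 < d := r.pos
  have hcoe_nsmul : ∀ (k : ℕ) (x : ℝ),
      ((k • x : ℝ) : AddCircle (1:ℝ)) = k • ((x : ℝ) : AddCircle (1:ℝ)) :=
    fun k x => AddCircle.coe_nsmul 1
  have hdβ : d • βc = 0 := by
    have hq1 : ((r.den:ℚ)) * r = (r.num:ℚ) := by
      rw [mul_comm]; exact_mod_cast Rat.mul_den_eq_num r
    have h1 : (d:ℝ) * β = (r.num : ℝ) := by
      rw [← hr, hddef]; exact_mod_cast hq1
    have h2 : d • βc = (((d:ℝ) * β : ℝ) : AddCircle (1:ℝ)) := by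
      rw [hβcdef, ← hcoe_nsmul d β, nsmul_eq_mul]
    rw [h2, h1]
    rw [QuotientAddGroup.eq_zero_iff, AddSubgroup.mem_zmultiples_iff]
    exact ⟨r.num, by rw [zsmul_eq_mul]; ring⟩
  set x₀ : T2 := proj 0 with hx₀def
  set S : Set (AddCircle (1:ℝ)) := (fun k : ℕ => h x₀ + k • βc) '' Iio d with hSdef
  have hSfin : S.Finite := (finite_Iio d).image _
  have hScl : IsClosed S := hSfin.isClosed
  have hSstep : ∀ y ∈ S, y + βc ∈ S := by
    rintro _ ⟨k, hk, rfl⟩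
    rcases lt_or_eq_of_le (Nat.succ_le_of_lt hk) with h' | h'
    · refine ⟨k+1, mem_Iio.mpr h', ?_⟩
      show h x₀ + (k+1) • βc = h x₀ + k • βc + βc
      rw [succ_nsmul]; abel
    · refine ⟨0, mem_Iio.mpr hdpos, ?_⟩
      show h x₀ + (0:ℕ) • βc = h x₀ + k • βc + βc
      have hk1 : (k+1) • βc = 0 := by rw [show k + 1 = d from h']; exact hdβ
      rw [succ_nsmul] at hk1
      rw [zero_nsmul, add_zero, add_assoc, hk1, add_zero]
  have hSstep' : ∀ y ∈ S, y - βc ∈ S := by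
    rintro _ ⟨k, hk, rfl⟩
    cases k with
    | zero =>
      refine ⟨d - 1, mem_Iio.mpr (by omega), ?_⟩
      show h x₀ + (d-1) • βc = h x₀ + (0:ℕ) • βc - βc
      have hsum : (d-1) • βc + βc = 0 := by
        rw [← succ_nsmul]
        have hd1 : d - 1 + 1 = d := by omega
        rw [hd1]; exact hdβ
      have hneg : (d-1) • βc = -βc := by
        rw [eq_neg_iff_add_eq_zero]; exact hsum
      rw [hneg, zero_nsmul, add_zero, sub_eq_add_neg]
    | succ k' =>
      refine ⟨k', mem_Iio.mpr (lt_trans (Nat.lt_succ_self k') hk), ?_⟩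
      show h x₀ + k' • βc = h x₀ + (k'+1) • βc - βc
      rw [succ_nsmul]
      abel
  set A : Set T2 := h ⁻¹' S with hAdef
  have hAcl : IsClosed A := hScl.preimage hhc
  have hAinv : (⇑f) '' A = A := by
    apply Subset.antisymm
    · rintro _ ⟨x, hx, rfl⟩
      show h (f x) ∈ S
      rw [hconj x]
      exact hSstep _ hx
    · intro x hx
      refine ⟨f.symm x, ?_, f.apply_symm_apply x⟩
      show h (f.symm x) ∈ S
      have h1 := hconj (f.symm x)
      rw [f.apply_symm_apply] at h1
      have h2 : h (f.symm x) = h x - βc := by rw [h1]; abel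
      rw [h2]
      exact hSstep' _ hx
  have hx₀A : x₀ ∈ A := ⟨0, mem_Iio.mpr hdpos, by simp⟩
  haveI : Infinite (AddCircle (1:ℝ)) := by
    haveI h1 : Infinite ↥(Ico (0:ℝ) (0 + 1)) := Set.Ico.infinite (by norm_num)
    exact Infinite.of_surjective ⇑(AddCircle.equivIco (1:ℝ) (0:ℝ))
      (AddCircle.equivIco (1:ℝ) (0:ℝ)).surjective
  obtain ⟨y, hy⟩ : Sᶜ.Nonempty := (hSfin.infinite_compl).nonempty
  obtain ⟨x, rfl⟩ := hsurj y
  rcases hmin A hAcl hAinv with hA | hA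
  · exact Set.eq_empty_iff_forall_notMem.mp hA x₀ hx₀A
  · exact hy (Set.eq_univ_iff_forall.mp hA x)
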